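/- Suppose α, β, γ are m-th roots of unity such that α + β + γ is again an m-th root of unity. Then m is even. Conversely, if m is even, such roots exist (take α = β = 1, γ = -1). -/

import Mathlib

theorem roots_sum_three (m : ℕ) (hm : 0 < m) :
    (∃ α β γ : ℂ, α ^ m = 1 ∧ β ^ m = 1 ∧ γ ^ m = 1 ∧ (α + β + γ) ^ m = 1) ↔ Even m := by
  constructor
  · rintro ⟨α, β, γ, hα, hβ, hγ, hs⟩
    have hm' : m ≠ 0 := hm.ne'
    have ne : ∀ z : ℂ, z ^ m = 1 → z ≠ 0 := by
      rintro z hz rfl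
      simp [zero_pow hm'] at hz
    have inv : ∀ z : ℂ, z ^ m = 1 → (starRingEnd ℂ) z = z⁻¹ := by
      intro z hz
      have h1 : ‖z‖ ^ m = 1 := by
        rw [← norm_pow, hz, norm_one]
      have h2 : ‖z‖ = 1 :=
        (pow_left_inj₀ (norm_nonneg z) zero_le_one hm').1 (by rw [h1, one_pow])
      exact (Complex.inv_eq_conj h2).symm
    have hα0 := ne α hα
    have hβ0 := ne β hβ
    have hγ0 := ne γ hγ
    have hs0 := ne _ hs
    have key : (α + β + γ)⁻¹ = α⁻¹ + β⁻¹ + γ⁻¹ := by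
      rw [← inv _ hs, map_add, map_add, inv _ hα, inv _ hβ, inv _ hγ]
    have key2 : α * β * γ = (α + β + γ) * (β * γ + α * γ + α * β) := by
      field_simp at key
      linear_combination key
    have prod : (β + γ) * (α + γ) * (α + β) = 0 := by
      linear_combination -key2
    have neg1 : (-1 : ℂ) ^ m = 1 := by
      rcases mul_eq_zero.1 prod with h | h
      · rcases mul_eq_zero.1 h with h | h
        · have : γ = -β := by linear_combination h
          rw [this, neg_pow, hβ, mul_one] at hγ
          exact hγ
        · have : γ = -α := by linear_combination h
          rw [this, neg_pow, hα, mul_one] at hγ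
          exact hγ
      · have : β = -α := by linear_combination h
        rw [this, neg_pow, hα, mul_one] at hβ
        exact hβ
    exact (neg_one_pow_eq_one_iff_even (R := ℂ) (n := m) (by norm_num)).1 neg1
  · intro h
    refine ⟨1, 1, -1, one_pow m, one_pow m, ?_, ?_⟩
    · exact h.neg_one_pow
    · norm_num
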